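/- Graphs with maximum density achieved have at most linearly many minimal densest subgraphs: a connected graph G on n vertices has at most n-1 distinct minimal densest subgraphs. -/

import Mathlib

open scoped BigOperators

variable {V : Type*}

/-- Density of a subgraph: m(H)/(n(H)-1). -/
noncomputable def density (G : SimpleGraph V) (H : G.Subgraph) : ℝ :=
  (H.edgeSet.ncard : ℝ) / ((H.verts.ncard : ℝ) - 1)

/-- Fractional arboricity: maximum density over connected subgraphs. -/
noncomputable def fracArboricity (G : SimpleGraph V) : ℝ :=
  sSup {d : ℝ | ∃ H : G.Subgraph, H.Connected ∧ d = density G H}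

/-- A densest subgraph: connected, attaining the maximum density. -/
def IsDensest (G : SimpleGraph V) (H : G.Subgraph) : Prop :=
  H.Connected ∧ density G H = fracArboricity G

/-- A minimal densest subgraph: no proper subgraph is densest. -/
def IsMinimalDensest (G : SimpleGraph V) (H : G.Subgraph) : Prop :=
  IsDensest G H ∧ ∀ K : G.Subgraph, K < H → ¬ IsDensest G K

section Aux

open SimpleGraph

variable [Fintype V] {G : SimpleGraph V}

private lemma two_le_verts_of_mem_edgeSet {H : G.Subgraph} {e : Sym2 V} (he : e ∈ H.edgeSet) :
    2 ≤ H.verts.ncard := by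
  induction e using Sym2.ind with
  | _ a b =>
    rw [SimpleGraph.Subgraph.mem_edgeSet] at he
    have hsub : ({a, b} : Set V) ⊆ H.verts := by
      rintro x (rfl | rfl)
      · exact he.fst_mem
      · exact he.snd_mem
    calc 2 = ({a, b} : Set V).ncard := (Set.ncard_pair he.ne).symm
      _ ≤ H.verts.ncard := Set.ncard_le_ncard hsub (Set.toFinite _)

private lemma edgeSet_eq_empty_of_small {H : G.Subgraph} (h : H.verts.ncard ≤ 1) :
    H.edgeSet = ∅ := by
  rw [Set.eq_empty_iff_forall_notMem]
  intro e he
  exact absurd (two_le_verts_of_mem_edgeSet he) (by omega)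

private lemma bddAbove_density_set :
    BddAbove {d : ℝ | ∃ H : G.Subgraph, H.Connected ∧ d = density G H} := by
  refine ⟨(Fintype.card (Sym2 V) : ℝ), ?_⟩
  rintro d ⟨H, hH, rfl⟩
  unfold density
  rcases le_or_gt H.verts.ncard 1 with h | h
  · rw [edgeSet_eq_empty_of_small h]
    simp only [Set.ncard_empty, Nat.cast_zero, zero_div]
    positivity
  · have h1 : (1 : ℝ) ≤ (H.verts.ncard : ℝ) - 1 := by
      have : (2 : ℝ) ≤ (H.verts.ncard : ℝ) := by exact_mod_cast h
      linarith
    have hm : (H.edgeSet.ncard : ℝ) ≤ (Fintype.card (Sym2 V) : ℝ) := by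
      have := Set.ncard_le_ncard (Set.subset_univ H.edgeSet) Set.finite_univ
      rw [Set.ncard_univ, Nat.card_eq_fintype_card] at this
      exact_mod_cast this
    exact le_trans (div_le_self (by positivity) h1) hm

private lemma density_le_fracArboricity {H : G.Subgraph} (hH : H.Connected) :
    density G H ≤ fracArboricity G :=
  le_csSup bddAbove_density_set ⟨H, hH, rfl⟩

private lemma edge_bound_of_connected {H : G.Subgraph} (hH : H.Connected) :
    (H.edgeSet.ncard : ℝ) ≤ fracArboricity G * ((H.verts.ncard : ℝ) - 1) := by
  have hd := density_le_fracArboricity hH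
  rcases le_or_gt H.verts.ncard 1 with h | h
  · have hne : H.verts.Nonempty := hH.nonempty
    have h1 : H.verts.ncard = 1 := by
      have := (Set.ncard_pos (Set.toFinite _)).mpr hne
      omega
    rw [edgeSet_eq_empty_of_small h, h1]
    simp
  · have h1 : (0 : ℝ) < (H.verts.ncard : ℝ) - 1 := by
      have : (2 : ℝ) ≤ (H.verts.ncard : ℝ) := by exact_mod_cast h
      linarith
    have := (div_le_iff₀ h1).mp hd
    linarith [this]

private lemma one_le_fracArboricity (hG : G.Connected) (hn : 2 ≤ Fintype.card V) :
    1 ≤ fracArboricity G := by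
  obtain ⟨u, v, huv⟩ : ∃ u v, G.Adj u v := by
    obtain ⟨u, v, huv⟩ := Fintype.exists_pair_of_one_lt_card (α := V) (by omega)
    obtain ⟨p⟩ := hG.preconnected u v
    cases p with
    | nil => exact absurd rfl huv
    | cons h _ => exact ⟨_, _, h⟩
  have hdens : density G (G.subgraphOfAdj huv) = 1 := by
    unfold density
    rw [SimpleGraph.edgeSet_subgraphOfAdj]
    have hv : (G.subgraphOfAdj huv).verts = {u, v} := rfl
    rw [hv, Set.ncard_singleton, Set.ncard_pair huv.ne]
    norm_num
  calc (1 : ℝ) = density G (G.subgraphOfAdj huv) := hdens.symm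
    _ ≤ fracArboricity G := density_le_fracArboricity (SimpleGraph.Subgraph.subgraphOfAdj_connected huv)

/-- Key bound: any nonempty subgraph `K` satisfies `m(K) ≤ d (n(K) - 1)`, and if it is
disconnected, even `m(K) ≤ d (n(K) - 2)`. -/
private lemma key_bound (hd : 1 ≤ fracArboricity G) :
    ∀ n : ℕ, ∀ K : G.Subgraph, K.verts.ncard = n → K.verts.Nonempty →
      (K.edgeSet.ncard : ℝ) ≤ fracArboricity G * ((K.verts.ncard : ℝ) - 1) ∧
      (¬ K.Connected →
        (K.edgeSet.ncard : ℝ) ≤ fracArboricity G * ((K.verts.ncard : ℝ) - 2)) := by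
  intro n
  induction n using Nat.strong_induction_on with
  | _ n ih =>
    intro K hcard hne
    by_cases hconn : K.Connected
    · exact ⟨edge_bound_of_connected hconn, fun h => absurd hconn h⟩
    · -- split off a reachability class
      have hpre : ¬ K.Preconnected := by
        intro hp
        exact hconn (Subgraph.connected_iff.mpr ⟨hp, hne⟩)
      rw [Subgraph.preconnected_iff] at hpre
      unfold SimpleGraph.Preconnected at hpre
      push_neg at hpre
      obtain ⟨x, y, hxy⟩ := hpre
      set S : Set V := {w | ∃ hw : w ∈ K.verts, K.coe.Reachable x ⟨w, hw⟩} with hSdef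
      have hSsub : S ⊆ K.verts := fun w hw => hw.1
      have hxS : (x : V) ∈ S := ⟨x.2, by rw [Subtype.coe_eta]⟩
      have hyS : (y : V) ∉ S := by
        rintro ⟨hw, hr⟩
        rw [Subtype.coe_eta] at hr
        exact hxy hr
      have hclose : ∀ a b : V, a ∈ S → K.Adj a b → b ∈ S := by
        rintro a b ⟨ha, hr⟩ hab
        refine ⟨hab.snd_mem, hr.trans (SimpleGraph.Adj.reachable ?_)⟩
        exact hab
      set K₁ := K.induce S with hK₁
      set K₂ := K.induce (K.verts \ S) with hK₂
      have hV₁ : K₁.verts = S := rfl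
      have hV₂ : K₂.verts = K.verts \ S := rfl
      have hE : K.edgeSet = K₁.edgeSet ∪ K₂.edgeSet := by
        ext e
        induction e using Sym2.ind with
        | _ a b =>
          simp only [Set.mem_union, Subgraph.mem_edgeSet, Subgraph.induce_adj]
          constructor
          · intro hab
            by_cases haS : a ∈ S
            · exact Or.inl ⟨haS, hclose a b haS hab, hab⟩
            · have hbS : b ∉ S := fun hbS => haS (hclose b a hbS hab.symm)
              exact Or.inr ⟨⟨hab.fst_mem, haS⟩, ⟨hab.snd_mem, hbS⟩, hab⟩
          · rintro (⟨_, _, hab⟩ | ⟨_, _, hab⟩) <;> exact hab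
      have hdisj : Disjoint K₁.edgeSet K₂.edgeSet := by
        rw [Set.disjoint_left]
        intro e he1 he2
        induction e using Sym2.ind with
        | _ a b =>
          rw [Subgraph.mem_edgeSet, Subgraph.induce_adj] at he1 he2
          exact he2.1.2 he1.1
      have hEcard : K.edgeSet.ncard = K₁.edgeSet.ncard + K₂.edgeSet.ncard := by
        rw [hE]
        exact Set.ncard_union_eq hdisj (Set.toFinite _) (Set.toFinite _)
      have hVcard : (K.verts \ S).ncard + S.ncard = K.verts.ncard :=
        Set.ncard_diff_add_ncard_of_subset hSsub (Set.toFinite _)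
      have hne₁ : K₁.verts.Nonempty := ⟨x, hxS⟩
      have hne₂ : K₂.verts.Nonempty := ⟨y, ⟨y.2, hyS⟩⟩
      have hpos₁ : 0 < S.ncard := (Set.ncard_pos (Set.toFinite _)).mpr hne₁
      have hpos₂ : 0 < (K.verts \ S).ncard := (Set.ncard_pos (Set.toFinite _)).mpr hne₂
      have hlt₁ : S.ncard < n := by omega
      have hlt₂ : (K.verts \ S).ncard < n := by omega
      have hb₁ := (ih S.ncard hlt₁ K₁ rfl hne₁).1
      have hb₂ := (ih (K.verts \ S).ncard hlt₂ K₂ rfl hne₂).1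
      rw [hV₁] at hb₁
      rw [hV₂] at hb₂
      have hdpos : (0 : ℝ) < fracArboricity G := lt_of_lt_of_le one_pos hd
      have hcast : (S.ncard : ℝ) + ((K.verts \ S).ncard : ℝ) = (K.verts.ncard : ℝ) := by
        exact_mod_cast by omega
      have hm : (K.edgeSet.ncard : ℝ)
          ≤ fracArboricity G * ((K.verts.ncard : ℝ) - 2) := by
        have : (K.edgeSet.ncard : ℝ) = (K₁.edgeSet.ncard : ℝ) + (K₂.edgeSet.ncard : ℝ) := by
          exact_mod_cast hEcard
        rw [this]
        nlinarith [hb₁, hb₂]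
      refine ⟨?_, fun _ => hm⟩
      nlinarith [hm]

private lemma densest_facts (hd : 1 ≤ fracArboricity G) {H : G.Subgraph}
    (h : IsDensest G H) :
    2 ≤ H.verts.ncard ∧
      (H.edgeSet.ncard : ℝ) = fracArboricity G * ((H.verts.ncard : ℝ) - 1) := by
  have hne : H.verts.Nonempty := h.1.nonempty
  have h2 : 2 ≤ H.verts.ncard := by
    by_contra hlt
    push_neg at hlt
    have h1 : H.verts.ncard = 1 := by
      have := (Set.ncard_pos (Set.toFinite _)).mpr hne
      omega
    have hzero : density G H = 0 := by
      unfold density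
      rw [edgeSet_eq_empty_of_small (le_of_eq h1), h1]
      simp
    rw [h.2] at hzero
    linarith
  refine ⟨h2, ?_⟩
  have h1 : (0 : ℝ) < (H.verts.ncard : ℝ) - 1 := by
    have : (2 : ℝ) ≤ (H.verts.ncard : ℝ) := by exact_mod_cast h2
    linarith
  have := h.2
  unfold density at this
  rw [div_eq_iff h1.ne'] at this
  linarith [this]

private lemma edge_disjoint_of_minimal (hd : 1 ≤ fracArboricity G) {H₁ H₂ : G.Subgraph}
    (h1 : IsMinimalDensest G H₁) (h2 : IsMinimalDensest G H₂) (hne : H₁ ≠ H₂) :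
    Disjoint H₁.edgeSet H₂.edgeSet := by
  by_contra hdis
  rw [Set.not_disjoint_iff] at hdis
  obtain ⟨e, he1, he2⟩ := hdis
  have heinf : e ∈ (H₁ ⊓ H₂).edgeSet := by
    rw [Subgraph.edgeSet_inf]; exact ⟨he1, he2⟩
  have h2inf : 2 ≤ (H₁ ⊓ H₂).verts.ncard := two_le_verts_of_mem_edgeSet heinf
  have hinfne : (H₁ ⊓ H₂).verts.Nonempty :=
    Set.nonempty_of_ncard_ne_zero (by omega)
  have hsupconn : (H₁ ⊔ H₂).Connected := Subgraph.connected_sup h1.1.1.preconnected h2.1.1.preconnected hinfne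
  obtain ⟨hn1, hm1⟩ := densest_facts hd h1.1
  obtain ⟨hn2, hm2⟩ := densest_facts hd h2.1
  have hsup := edge_bound_of_connected hsupconn
  have hie : (H₁ ⊔ H₂).edgeSet.ncard + (H₁ ⊓ H₂).edgeSet.ncard
      = H₁.edgeSet.ncard + H₂.edgeSet.ncard := by
    rw [Subgraph.edgeSet_sup, Subgraph.edgeSet_inf]
    exact Set.ncard_union_add_ncard_inter _ _ (Set.toFinite _) (Set.toFinite _)
  have hiv : (H₁ ⊔ H₂).verts.ncard + (H₁ ⊓ H₂).verts.ncard
      = H₁.verts.ncard + H₂.verts.ncard := by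
    rw [Subgraph.verts_sup, Subgraph.verts_inf]
    exact Set.ncard_union_add_ncard_inter _ _ (Set.toFinite _) (Set.toFinite _)
  have hieR : ((H₁ ⊔ H₂).edgeSet.ncard : ℝ) + ((H₁ ⊓ H₂).edgeSet.ncard : ℝ)
      = (H₁.edgeSet.ncard : ℝ) + (H₂.edgeSet.ncard : ℝ) := by exact_mod_cast hie
  have hivR : ((H₁ ⊔ H₂).verts.ncard : ℝ) + ((H₁ ⊓ H₂).verts.ncard : ℝ)
      = (H₁.verts.ncard : ℝ) + (H₂.verts.ncard : ℝ) := by exact_mod_cast hiv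
  have hlow : fracArboricity G * (((H₁ ⊓ H₂).verts.ncard : ℝ) - 1)
      ≤ ((H₁ ⊓ H₂).edgeSet.ncard : ℝ) := by
    nlinarith [hsup, hieR, hivR, hm1, hm2]
  have hinf2R : (2 : ℝ) ≤ ((H₁ ⊓ H₂).verts.ncard : ℝ) := by exact_mod_cast h2inf
  by_cases hconn : (H₁ ⊓ H₂).Connected
  · have hup := edge_bound_of_connected hconn
    have heq : ((H₁ ⊓ H₂).edgeSet.ncard : ℝ)
        = fracArboricity G * (((H₁ ⊓ H₂).verts.ncard : ℝ) - 1) := le_antisymm hup hlow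
    have hdens : IsDensest G (H₁ ⊓ H₂) := by
      refine ⟨hconn, ?_⟩
      unfold density
      rw [heq]
      have hpos : (0 : ℝ) < ((H₁ ⊓ H₂).verts.ncard : ℝ) - 1 := by linarith
      exact mul_div_cancel_right₀ _ hpos.ne'
    rcases lt_or_eq_of_le (inf_le_left : H₁ ⊓ H₂ ≤ H₁) with hlt | heq1
    · exact h1.2 _ hlt hdens
    · have hle : H₁ ≤ H₂ := inf_eq_left.mp heq1
      exact h2.2 H₁ (lt_of_le_of_ne hle hne) h1.1
  · have hdisc := (key_bound hd (H₁ ⊓ H₂).verts.ncard (H₁ ⊓ H₂) rfl hinfne).2 hconn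
    nlinarith [hlow, hdisc, hd]

private lemma finite_subgraph (G : SimpleGraph V) : Finite G.Subgraph := by
  have : Finite (Set V × (V → V → Prop)) := by infer_instance
  exact Finite.of_injective (fun H : G.Subgraph => (H.verts, H.Adj)) (by
    intro a b hab
    ext1
    · exact congrArg Prod.fst hab
    · exact congrArg Prod.snd hab)

private lemma top_connected' (hG : G.Connected) : (⊤ : G.Subgraph).Connected := by
  refine ⟨hG.map Subgraph.topIso.symm.toHom ?_⟩
  intro v
  exact ⟨Subgraph.topIso v, Subgraph.topIso.symm_apply_apply v⟩

end Aux

/-- a connected graph on n ≥ 2 vertices has at most n - 1 minimal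
densest subgraphs. -/
theorem card_minimalDensest_le [Fintype V] (G : SimpleGraph V) (hG : G.Connected)
    (hn : 2 ≤ Fintype.card V) :
    {H : G.Subgraph | IsMinimalDensest G H}.ncard ≤ Fintype.card V - 1 := by
  classical
  have : Finite G.Subgraph := finite_subgraph G
  have hd : 1 ≤ fracArboricity G := one_le_fracArboricity hG hn
  have hdpos : (0 : ℝ) < fracArboricity G := lt_of_lt_of_le one_pos hd
  set S := {H : G.Subgraph | IsMinimalDensest G H} with hSdef
  have hfin : S.Finite := Set.toFinite S
  set F := hfin.toFinset with hFdef
  have hcardF : F.card = S.ncard := (Set.ncard_eq_toFinset_card S hfin).symm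
  have hmemF : ∀ H ∈ F, IsMinimalDensest G H := by
    intro H hH
    rw [hFdef, Set.Finite.mem_toFinset] at hH
    exact hH
  -- lower bound on each edge count
  have hlow : ∀ H ∈ F, fracArboricity G ≤ (H.edgeSet.ncard : ℝ) := by
    intro H hH
    obtain ⟨h2, hm⟩ := densest_facts hd (hmemF H hH).1
    have h2R : (2 : ℝ) ≤ (H.verts.ncard : ℝ) := by exact_mod_cast h2
    rw [hm]
    nlinarith
  -- edge sets are pairwise disjoint
  have hdisjF : ∀ x ∈ F, ∀ y ∈ F, x ≠ y →
      Disjoint (Set.toFinite x.edgeSet).toFinset (Set.toFinite y.edgeSet).toFinset := by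
    intro x hx y hy hxy
    rw [Set.Finite.disjoint_toFinset]
    exact edge_disjoint_of_minimal hd (hmemF x hx) (hmemF y hy) hxy
  have hbi := Finset.card_biUnion hdisjF
  -- the union of the edge sets is contained in the edge set of ⊤
  have hsub : F.biUnion (fun H => (Set.toFinite H.edgeSet).toFinset)
      ⊆ (Set.toFinite (⊤ : G.Subgraph).edgeSet).toFinset := by
    intro e he
    rw [Finset.mem_biUnion] at he
    obtain ⟨H, _, heH⟩ := he
    rw [Set.Finite.mem_toFinset] at heH ⊢
    exact H.edgeSet_subset.trans (le_of_eq SimpleGraph.Subgraph.edgeSet_top.symm) heH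
  have htopcard : (Set.toFinite (⊤ : G.Subgraph).edgeSet).toFinset.card
      = (⊤ : G.Subgraph).edgeSet.ncard :=
    (Set.ncard_eq_toFinset_card _ (Set.toFinite _)).symm
  have htop : ((⊤ : G.Subgraph).edgeSet.ncard : ℝ)
      ≤ fracArboricity G * ((Fintype.card V : ℝ) - 1) := by
    have := edge_bound_of_connected (top_connected' hG)
    rwa [show (⊤ : G.Subgraph).verts = Set.univ from rfl, Set.ncard_univ,
      Nat.card_eq_fintype_card] at this
  -- put everything together
  have hsum : (F.card : ℝ) * fracArboricity G ≤ ∑ H ∈ F, (H.edgeSet.ncard : ℝ) := by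
    calc (F.card : ℝ) * fracArboricity G = ∑ _H ∈ F, fracArboricity G := by
          rw [Finset.sum_const, nsmul_eq_mul]
      _ ≤ ∑ H ∈ F, (H.edgeSet.ncard : ℝ) := Finset.sum_le_sum hlow
  have hsum2 : ∑ H ∈ F, (H.edgeSet.ncard : ℝ)
      ≤ ((⊤ : G.Subgraph).edgeSet.ncard : ℝ) := by
    have hnat : ∑ H ∈ F, H.edgeSet.ncard ≤ (⊤ : G.Subgraph).edgeSet.ncard := by
      have h1 : ∑ H ∈ F, H.edgeSet.ncard
          = ∑ H ∈ F, (Set.toFinite H.edgeSet).toFinset.card := by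
        refine Finset.sum_congr rfl fun H _ => ?_
        exact Set.ncard_eq_toFinset_card _ (Set.toFinite _)
      rw [h1, ← hbi, ← htopcard]
      exact Finset.card_le_card hsub
    exact_mod_cast hnat
  have hfinal : (F.card : ℝ) * fracArboricity G
      ≤ fracArboricity G * ((Fintype.card V : ℝ) - 1) :=
    le_trans hsum (le_trans hsum2 htop)
  have hFle : (F.card : ℝ) ≤ (Fintype.card V : ℝ) - 1 := by
    nlinarith
  have : F.card + 1 ≤ Fintype.card V := by
    have : (F.card : ℝ) + 1 ≤ (Fintype.card V : ℝ) := by linarith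
    exact_mod_cast this
  omega
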